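/- For every n and every positive integer k with 2k < n, there exists a finite set S of simple graphs on the vertex set Fin n such that every graph in S is an interval graph, the graphs in S are pairwise non-isomorphic, and 3^n · |S| ≥ C(k², n − 2k), where C(·,·) denotes the binomial coefficient. -/

import Mathlib

/-- A simple graph on `Fin n` is an interval graph if it has a realization by
closed real intervals. -/
def IsIntervalGraph {n : ℕ} (G : SimpleGraph (Fin n)) : Prop :=
  ∃ l r : Fin n → ℝ, (∀ v, l v ≤ r v) ∧
    ∀ u v : Fin n, u ≠ v →
      (G.Adj u v ↔ (Set.Icc (l u) (r u) ∩ Set.Icc (l v) (r v)).Nonempty)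

open Finset

namespace IntervalAux

variable (n k : ℕ)

/-- role: 0 = A-vertex (val < k), 1 = B-vertex (k ≤ val < 2k), 2 = C-vertex (val ≥ 2k). -/
def role (v : Fin n) : Fin 3 := if v.val < k then 0 else if v.val < 2*k then 1 else 2

lemma role_eq_zero (v : Fin n) : role n k v = 0 ↔ v.val < k := by
  unfold role; split_ifs with h1 h2 <;> simp_all <;> omega

lemma role_eq_one (v : Fin n) : role n k v = 1 ↔ (k ≤ v.val ∧ v.val < 2*k) := by
  unfold role; split_ifs with h1 h2 <;> simp_all <;> omega

lemma role_eq_two (v : Fin n) : role n k v = 2 ↔ 2*k ≤ v.val := by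
  unfold role; split_ifs with h1 h2 <;> simp_all <;> omega

/-- left endpoint (as a natural number) of the interval of vertex v. -/
def cL (c : Fin n → Fin k × Fin k) (v : Fin n) : ℕ :=
  if v.val < 2*k then v.val else (c v).1.val

/-- right endpoint. -/
def cR (c : Fin n → Fin k × Fin k) (v : Fin n) : ℕ :=
  if v.val < 2*k then v.val else k + (c v).2.val

lemma cL_le_cR (c : Fin n → Fin k × Fin k) (v : Fin n) : cL n k c v ≤ cR n k c v := by
  unfold cL cR; split
  · exact le_rfl
  · have := (c v).1.isLt; omega

/-- The interval graph associated to a cell assignment `c`. -/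
def G (c : Fin n → Fin k × Fin k) : SimpleGraph (Fin n) where
  Adj u v := u ≠ v ∧ max (cL n k c u) (cL n k c v) ≤ min (cR n k c u) (cR n k c v)
  symm := by
    constructor
    intro u v h
    exact ⟨Ne.symm h.1, by rw [max_comm, min_comm]; exact h.2⟩
  loopless := ⟨fun v h => h.1 rfl⟩

lemma isInterval_G (c : Fin n → Fin k × Fin k) : IsIntervalGraph (G n k c) := by
  refine ⟨fun v => (cL n k c v : ℝ), fun v => (cR n k c v : ℝ),
    fun v => by simp only []; exact_mod_cast cL_le_cR n k c v, ?_⟩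
  intro u v huv
  rw [Set.Icc_inter_Icc, Set.nonempty_Icc]
  simp only []
  constructor
  · intro h; exact_mod_cast h.2
  · intro h; exact ⟨huv, by exact_mod_cast h⟩


lemma card_val_filter (lo hi : ℕ) (h : hi ≤ n) :
    ((univ : Finset (Fin n)).filter (fun a => lo ≤ a.val ∧ a.val < hi)).card = hi - lo := by
  have he : ((univ : Finset (Fin n)).filter (fun a => lo ≤ a.val ∧ a.val < hi)) =
      (Finset.Ico lo hi).attachFin
        (fun x hx => lt_of_lt_of_le (Finset.mem_Ico.mp hx).2 h) := by
    ext a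
    simp [Finset.mem_attachFin, Finset.mem_Ico]
  rw [he, Finset.card_attachFin, Nat.card_Ico]

open Classical in
/-- number of neighbours of v with role-label 0 -/
noncomputable def adeg (H : SimpleGraph (Fin n)) (t : Fin n → Fin 3) (v : Fin n) : ℕ :=
  ((univ : Finset (Fin n)).filter (fun a => t a = 0 ∧ H.Adj a v)).card

open Classical in
/-- number of neighbours of v with role-label 1 -/
noncomputable def bdeg (H : SimpleGraph (Fin n)) (t : Fin n → Fin 3) (v : Fin n) : ℕ :=
  ((univ : Finset (Fin n)).filter (fun a => t a = 1 ∧ H.Adj a v)).card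

open Classical in
/-- recover the cell multiset (as a set) from a graph plus a role-labelling -/
noncomputable def recov (hk : 0 < k) (H : SimpleGraph (Fin n)) (t : Fin n → Fin 3) :
    Finset (Fin k × Fin k) :=
  ((univ : Finset (Fin n)).filter (fun v => t v = 2)).image
    (fun v => (⟨(k - adeg n H t v) % k, Nat.mod_lt _ hk⟩,
               ⟨(bdeg n H t v - 1) % k, Nat.mod_lt _ hk⟩))

lemma adeg_iso {Gr H : SimpleGraph (Fin n)} (e : Gr ≃g H) (t : Fin n → Fin 3) (w : Fin n) :
    adeg n H (t ∘ e.symm) (e w) = adeg n Gr t w := by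
  classical
  unfold adeg
  apply Finset.card_bij' (fun a _ => e.symm a) (fun a _ => e a)
  · intro a ha
    simp only [Finset.mem_filter, Finset.mem_univ, true_and, Function.comp] at ha ⊢
    refine ⟨ha.1, ?_⟩
    have := ha.2
    rwa [show a = e (e.symm a) by simp, SimpleGraph.Iso.map_adj_iff] at this
  · intro a ha
    simp only [Finset.mem_filter, Finset.mem_univ, true_and, Function.comp] at ha ⊢
    refine ⟨by simpa using ha.1, ?_⟩
    rw [SimpleGraph.Iso.map_adj_iff]
    exact ha.2
  · intro a _; simp
  · intro a _; simp

lemma bdeg_iso {Gr H : SimpleGraph (Fin n)} (e : Gr ≃g H) (t : Fin n → Fin 3) (w : Fin n) :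
    bdeg n H (t ∘ e.symm) (e w) = bdeg n Gr t w := by
  classical
  unfold bdeg
  apply Finset.card_bij' (fun a _ => e.symm a) (fun a _ => e a)
  · intro a ha
    simp only [Finset.mem_filter, Finset.mem_univ, true_and, Function.comp] at ha ⊢
    refine ⟨ha.1, ?_⟩
    have := ha.2
    rwa [show a = e (e.symm a) by simp, SimpleGraph.Iso.map_adj_iff] at this
  · intro a ha
    simp only [Finset.mem_filter, Finset.mem_univ, true_and, Function.comp] at ha ⊢
    refine ⟨by simpa using ha.1, ?_⟩
    rw [SimpleGraph.Iso.map_adj_iff]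
    exact ha.2
  · intro a _; simp
  · intro a _; simp

lemma recov_iso (hk : 0 < k) {Gr H : SimpleGraph (Fin n)} (e : Gr ≃g H) (t : Fin n → Fin 3) :
    recov n k hk H (t ∘ e.symm) = recov n k hk Gr t := by
  classical
  unfold recov
  ext x
  simp only [Finset.mem_image, Finset.mem_filter, Finset.mem_univ, true_and, Function.comp]
  constructor
  · rintro ⟨v, hv, rfl⟩
    refine ⟨e.symm v, hv, ?_⟩
    have h1 : adeg n H (t ∘ e.symm) v = adeg n Gr t (e.symm v) := by
      have := adeg_iso n e t (e.symm v); simpa using this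
    have h2 : bdeg n H (t ∘ e.symm) v = bdeg n Gr t (e.symm v) := by
      have := bdeg_iso n e t (e.symm v); simpa using this
    simp only [Prod.mk.injEq, Fin.mk.injEq]
    exact ⟨by rw [h1], by rw [h2]⟩
  · rintro ⟨w, hw, rfl⟩
    refine ⟨e w, by simpa using hw, ?_⟩
    simp only [Prod.mk.injEq, Fin.mk.injEq]
    exact ⟨by rw [adeg_iso n e t w], by rw [bdeg_iso n e t w]⟩


lemma adj_A_C (c : Fin n → Fin k × Fin k) {a v : Fin n} (ha : a.val < k) (hv : 2*k ≤ v.val) :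
    (G n k c).Adj a v ↔ (c v).1.val ≤ a.val := by
  have hav : a ≠ v := by
    intro h; subst h; omega
  have hcv1 := (c v).1.isLt
  have hcv2 := (c v).2.isLt
  show (a ≠ v ∧ _) ↔ _
  unfold cL cR
  rw [if_pos (by omega : a.val < 2*k), if_pos (by omega : a.val < 2*k),
    if_neg (by omega : ¬ v.val < 2*k), if_neg (by omega : ¬ v.val < 2*k)]
  simp only [max_le_iff, le_min_iff]
  constructor
  · intro h; exact h.2.1.2
  · intro h; exact ⟨hav, ⟨le_rfl, h⟩, by omega, by omega⟩

lemma adj_B_C (c : Fin n → Fin k × Fin k) {b v : Fin n} (hb1 : k ≤ b.val) (hb2 : b.val < 2*k)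
    (hv : 2*k ≤ v.val) :
    (G n k c).Adj b v ↔ b.val ≤ k + (c v).2.val := by
  have hbv : b ≠ v := by
    intro h; subst h; omega
  have hcv1 := (c v).1.isLt
  have hcv2 := (c v).2.isLt
  show (b ≠ v ∧ _) ↔ _
  unfold cL cR
  rw [if_pos hb2, if_pos hb2,
    if_neg (by omega : ¬ v.val < 2*k), if_neg (by omega : ¬ v.val < 2*k)]
  simp only [max_le_iff, le_min_iff]
  constructor
  · intro h; exact h.2.2.1
  · intro h; exact ⟨hbv, ⟨le_rfl, by omega⟩, h, by omega⟩

lemma adeg_G (hkn : 2*k < n) (c : Fin n → Fin k × Fin k) {v : Fin n} (hv : 2*k ≤ v.val) :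
    adeg n (G n k c) (role n k) v = k - (c v).1.val := by
  classical
  unfold adeg
  have he : ((univ : Finset (Fin n)).filter (fun a => role n k a = 0 ∧ (G n k c).Adj a v)) =
      ((univ : Finset (Fin n)).filter (fun a => (c v).1.val ≤ a.val ∧ a.val < k)) := by
    ext a
    simp only [Finset.mem_filter, Finset.mem_univ, true_and, role_eq_zero]
    constructor
    · rintro ⟨h1, h2⟩
      exact ⟨(adj_A_C n k c h1 hv).mp h2, h1⟩
    · rintro ⟨h1, h2⟩
      exact ⟨h2, (adj_A_C n k c h2 hv).mpr h1⟩
  rw [Finset.filter_congr_decidable] at he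
  rw [he, card_val_filter n _ _ (by omega)]

lemma bdeg_G (hkn : 2*k < n) (c : Fin n → Fin k × Fin k) {v : Fin n} (hv : 2*k ≤ v.val) :
    bdeg n (G n k c) (role n k) v = (c v).2.val + 1 := by
  classical
  unfold bdeg
  have hcv2 := (c v).2.isLt
  have he : ((univ : Finset (Fin n)).filter (fun a => role n k a = 1 ∧ (G n k c).Adj a v)) =
      ((univ : Finset (Fin n)).filter (fun a => k ≤ a.val ∧ a.val < k + (c v).2.val + 1)) := by
    ext b
    simp only [Finset.mem_filter, Finset.mem_univ, true_and, role_eq_one]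
    constructor
    · rintro ⟨⟨h1, h2⟩, h3⟩
      have := (adj_B_C n k c h1 h2 hv).mp h3
      exact ⟨h1, by omega⟩
    · rintro ⟨h1, h2⟩
      have h2' : b.val < 2*k := by omega
      exact ⟨⟨h1, h2'⟩, (adj_B_C n k c h1 h2' hv).mpr (by omega)⟩
  rw [Finset.filter_congr_decidable] at he
  rw [he, card_val_filter n _ _ (by omega)]
  omega

lemma recov_G (hk : 0 < k) (hkn : 2*k < n) (c : Fin n → Fin k × Fin k) :
    recov n k hk (G n k c) (role n k) =
      ((univ : Finset (Fin n)).filter (fun v => 2*k ≤ v.val)).image c := by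
  classical
  unfold recov
  ext x
  simp only [Finset.mem_image, Finset.mem_filter, Finset.mem_univ, true_and, role_eq_two]
  constructor
  · rintro ⟨v, hv, rfl⟩
    refine ⟨v, hv, ?_⟩
    have h1 := adeg_G n k hkn c hv
    have h2 := bdeg_G n k hkn c hv
    have hcv1 := (c v).1.isLt
    have hcv2 := (c v).2.isLt
    have e1 : (k - adeg n (G n k c) (role n k) v) % k = (c v).1.val := by
      rw [h1, Nat.sub_sub_self hcv1.le, Nat.mod_eq_of_lt hcv1]
    have e2 : (bdeg n (G n k c) (role n k) v - 1) % k = (c v).2.val := by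
      rw [h2, Nat.add_sub_cancel, Nat.mod_eq_of_lt hcv2]
    ext <;> simp [e1, e2]
  · rintro ⟨v, hv, rfl⟩
    refine ⟨v, hv, ?_⟩
    have h1 := adeg_G n k hkn c hv
    have h2 := bdeg_G n k hkn c hv
    have hcv1 := (c v).1.isLt
    have hcv2 := (c v).2.isLt
    have e1 : (k - adeg n (G n k c) (role n k) v) % k = (c v).1.val := by
      rw [h1, Nat.sub_sub_self hcv1.le, Nat.mod_eq_of_lt hcv1]
    have e2 : (bdeg n (G n k c) (role n k) v - 1) % k = (c v).2.val := by
      rw [h2, Nat.add_sub_cancel, Nat.mod_eq_of_lt hcv2]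
    ext <;> simp [e1, e2]


/-- assign cells to C-vertices by enumerating the finset `s`. -/
noncomputable def cOf (hk : 0 < k) (s : Finset (Fin k × Fin k)) (v : Fin n) : Fin k × Fin k :=
  if h : v.val - 2*k < s.card then (s.equivFin.symm ⟨v.val - 2*k, h⟩ : {x // x ∈ s}).1
  else (⟨0, hk⟩, ⟨0, hk⟩)

lemma image_cOf (hk : 0 < k) (hkn : 2*k < n) (s : Finset (Fin k × Fin k))
    (hs : s.card = n - 2*k) :
    ((univ : Finset (Fin n)).filter (fun v => 2*k ≤ v.val)).image (cOf n k hk s) = s := by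
  classical
  ext x
  simp only [Finset.mem_image, Finset.mem_filter, Finset.mem_univ, true_and]
  constructor
  · rintro ⟨v, hv, rfl⟩
    unfold cOf
    split
    · exact (s.equivFin.symm _).2
    · exfalso; have := v.isLt; omega
  · intro hx
    have hlt : (s.equivFin ⟨x, hx⟩).val < s.card := (s.equivFin ⟨x, hx⟩).isLt
    refine ⟨⟨2*k + (s.equivFin ⟨x, hx⟩).val, by omega⟩, by simp, ?_⟩
    unfold cOf
    have hcond : (2*k + (s.equivFin ⟨x, hx⟩).val) - 2*k < s.card := by omega
    rw [dif_pos hcond]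
    have : (⟨(2*k + (s.equivFin ⟨x, hx⟩).val) - 2*k, hcond⟩ : Fin s.card)
        = s.equivFin ⟨x, hx⟩ := by
      ext; simp
    rw [this, Equiv.symm_apply_apply]

lemma isInterval_of_iso {Gr H : SimpleGraph (Fin n)} (e : Gr ≃g H)
    (h : IsIntervalGraph H) : IsIntervalGraph Gr := by
  obtain ⟨l, r, hlr, hadj⟩ := h
  refine ⟨fun v => l (e v), fun v => r (e v), fun v => hlr (e v), ?_⟩
  intro u v huv
  rw [← SimpleGraph.Iso.map_adj_iff e]
  exact hadj (e u) (e v) (fun hh => huv (e.injective hh))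

end IntervalAux

/-- For every `n` and every positive `k` with `2k < n`, there is a finite family of pairwise
non-isomorphic interval graphs on `Fin n` whose cardinality `|S|` satisfies
`3^n · |S| ≥ C(k², n − 2k)`. -/
theorem interval_graph_family_binomial_bound (n k : ℕ) (hk : 0 < k) (hkn : 2 * k < n) :
    ∃ S : Finset (SimpleGraph (Fin n)),
      (∀ G ∈ S, IsIntervalGraph G) ∧
      (∀ G ∈ S, ∀ H ∈ S, G ≠ H → IsEmpty (G ≃g H)) ∧
      (k ^ 2).choose (n - 2 * k) ≤ 3 ^ n * S.card := by
  classical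
  -- the family of labelled interval graphs
  set F : Finset (Finset (Fin k × Fin k)) :=
    Finset.powersetCard (n - 2*k) (univ : Finset (Fin k × Fin k)) with hF
  set gph : Finset (Fin k × Fin k) → SimpleGraph (Fin n) :=
    fun s => IntervalAux.G n k (IntervalAux.cOf n k hk s) with hgph
  -- isomorphism classes via a quotient
  letI st : Setoid (SimpleGraph (Fin n)) :=
    ⟨fun G H => Nonempty (G ≃g H),
      ⟨fun G => ⟨SimpleGraph.Iso.refl⟩,
       fun h => h.map (fun e => e.symm),
       fun h h' => Nonempty.map2 (fun e e' => e.trans e') h h'⟩⟩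
  set rep : SimpleGraph (Fin n) → SimpleGraph (Fin n) :=
    fun G => (Quotient.mk st G).out with hrep
  have hrep_iso : ∀ G : SimpleGraph (Fin n), Nonempty (G ≃g rep G) := by
    intro G
    have h : Quotient.mk st ((Quotient.mk st G).out) = Quotient.mk st G :=
      Quotient.out_eq _
    exact (Quotient.exact h).map (fun e => e.symm)
  have hrep_eq : ∀ G H : SimpleGraph (Fin n), Nonempty (G ≃g H) → rep G = rep H :=
    fun G H h => congrArg Quotient.out (Quotient.sound h)
  have ee : ∀ G : SimpleGraph (Fin n), G ≃g rep G :=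
    fun G => Classical.choice (hrep_iso G)
  set T : Finset (SimpleGraph (Fin n)) := F.image gph with hT
  refine ⟨T.image rep, ?_, ?_, ?_⟩
  · -- every member is an interval graph
    intro Gr hGr
    rw [Finset.mem_image] at hGr
    obtain ⟨G, hG, rfl⟩ := hGr
    rw [hT, Finset.mem_image] at hG
    obtain ⟨s, _, rfl⟩ := hG
    exact IntervalAux.isInterval_of_iso n (ee (gph s)).symm
      (IntervalAux.isInterval_G n k (IntervalAux.cOf n k hk s))
  · -- pairwise non-isomorphic
    intro G1 h1 G2 h2 hne
    rw [Finset.mem_image] at h1 h2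
    obtain ⟨Ga, _, rfl⟩ := h1
    obtain ⟨Gb, _, rfl⟩ := h2
    constructor
    intro iso
    exact hne (hrep_eq Ga Gb ⟨(ee Ga).trans (iso.trans (ee Gb).symm)⟩)
  · -- counting
    have hFcard : F.card = (k ^ 2).choose (n - 2*k) := by
      rw [hF, Finset.card_powersetCard]
      congr 1
      rw [Finset.card_univ, Fintype.card_prod, Fintype.card_fin]
      ring
    -- the recovery function shows injectivity of the class-plus-labelling map
    set Φ : Finset (Fin k × Fin k) → SimpleGraph (Fin n) × (Fin n → Fin 3) :=
      fun s => (rep (gph s), IntervalAux.role n k ∘ ⇑(ee (gph s)).symm) with hΦ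
    have hkey : ∀ s ∈ F, s = IntervalAux.recov n k hk (Φ s).1 (Φ s).2 := by
      intro s hs
      have hscard : s.card = n - 2*k := (Finset.mem_powersetCard.mp hs).2
      rw [hΦ]
      rw [IntervalAux.recov_iso n k hk (ee (gph s)) (IntervalAux.role n k)]
      rw [hgph]
      rw [IntervalAux.recov_G n k hk hkn (IntervalAux.cOf n k hk s)]
      rw [IntervalAux.image_cOf n k hk hkn s hscard]
    have hinj : Set.InjOn Φ ↑F := by
      intro s hs s' hs' heq
      rw [hkey s hs, hkey s' hs', heq]
    have hmaps : ∀ s ∈ F, Φ s ∈ (T.image rep) ×ˢ (univ : Finset (Fin n → Fin 3)) := by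
      intro s hs
      rw [Finset.mem_product]
      refine ⟨?_, Finset.mem_univ _⟩
      exact Finset.mem_image_of_mem rep (Finset.mem_image_of_mem gph hs)
    have hcard := Finset.card_le_card_of_injOn Φ hmaps hinj
    rw [Finset.card_product, Finset.card_univ] at hcard
    have h3 : Fintype.card (Fin n → Fin 3) = 3 ^ n := by
      rw [Fintype.card_fun, Fintype.card_fin, Fintype.card_fin]
    rw [h3, hFcard] at hcard
    exact le_trans hcard (le_of_eq (Nat.mul_comm _ _))
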